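/- Let X be a Banach space such that every weakly compact linear operator from the N-fold symmetric projective tensor product ⊗̂^N_s X to any Banach space is completely continuous on the diagonal Δ_N(X). Then whenever (P_n) is a weakly null sequence of N-homogeneous polynomials on X and (x_n) converges P_N-weakly to x, we have P_n(x_n) → 0. -/

import Mathlib

open Filter Topology

/-- The topological dual `E →L[𝕜] 𝕜` of a normed space, as `NormedSpace.Dual` was defined in
the older Mathlib (a type synonym carrying the operator-norm structure). -/
def NormedSpace.Dual (𝕜 : Type*) [NontriviallyNormedField 𝕜] (E : Type*)
    [SeminormedAddCommGroup E] [NormedSpace 𝕜 E] : Type _ :=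
  E →L[𝕜] 𝕜

noncomputable instance (𝕜 : Type*) [NontriviallyNormedField 𝕜] (E : Type*) [SeminormedAddCommGroup E]
    [NormedSpace 𝕜 E] : SeminormedAddCommGroup (NormedSpace.Dual 𝕜 E) :=
  ContinuousLinearMap.toSeminormedAddCommGroup

noncomputable instance (𝕜 : Type*) [NontriviallyNormedField 𝕜] (E : Type*) [SeminormedAddCommGroup E]
    [NormedSpace 𝕜 E] : NormedSpace 𝕜 (NormedSpace.Dual 𝕜 E) :=
  ContinuousLinearMap.toNormedSpace

instance (𝕜 : Type*) [NontriviallyNormedField 𝕜] (E : Type*) [SeminormedAddCommGroup E]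
    [NormedSpace 𝕜 E] : FunLike (NormedSpace.Dual 𝕜 E) E 𝕜 :=
  ContinuousLinearMap.funLike

instance (𝕜 : Type*) [NontriviallyNormedField 𝕜] (E : Type*) [SeminormedAddCommGroup E]
    [NormedSpace 𝕜 E] : ContinuousLinearMapClass (NormedSpace.Dual 𝕜 E) 𝕜 E 𝕜 :=
  ContinuousLinearMap.continuousSemilinearMapClass

/-- The evaluation `θ_N(x) = x ⊗ ⋯ ⊗ x` viewed as a functional on `N`-linear forms. -/
noncomputable def deltaDiag (N : ℕ) {X : Type*} [NormedAddCommGroup X] [NormedSpace ℂ X]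
    (x : X) : NormedSpace.Dual ℂ (ContinuousMultilinearMap ℂ (fun _ : Fin N => X) ℂ) :=
  ContinuousMultilinearMap.apply ℂ (fun _ : Fin N => X) ℂ (fun _ => x)

/-- The canonical copy of the `N`-fold symmetric projective tensor product `⊗̂^N_s X`:
the closed linear span of the diagonal tensors `θ_N(x)` inside the dual of the space of
bounded `N`-linear forms on `X` (into which `⊗̂^N_s X` embeds isomorphically). -/
noncomputable def symTensor (N : ℕ) (X : Type*) [NormedAddCommGroup X] [NormedSpace ℂ X] :
    Submodule ℂ (NormedSpace.Dual ℂ (ContinuousMultilinearMap ℂ (fun _ : Fin N => X) ℂ)) :=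
  (Submodule.span ℂ (Set.range (fun x : X => deltaDiag N x))).topologicalClosure

theorem deltaDiag_mem_symTensor (N : ℕ) {X : Type*} [NormedAddCommGroup X]
    [NormedSpace ℂ X] (x : X) : deltaDiag N x ∈ symTensor N X :=
  Submodule.le_topologicalClosure _ (Submodule.subset_span ⟨x, rfl⟩)

/-- `θ_N(x)` as an element of `⊗̂^N_s X`. -/
noncomputable def deltaD (N : ℕ) {X : Type*} [NormedAddCommGroup X] [NormedSpace ℂ X]
    (x : X) : symTensor N X :=
  ⟨deltaDiag N x, deltaDiag_mem_symTensor N x⟩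


open BoundedContinuousFunction ZeroAtInftyContinuousMap
open scoped ZeroAtInfty

noncomputable section C0Aux

def mk0 (f : ℕ → ℂ) (h : Tendsto f atTop (𝓝 0)) : C₀(ℕ, ℂ) where
  toFun := f
  continuous_toFun := continuous_of_discreteTopology
  zero_at_infty' := by rwa [cocompact_eq_atTop]

@[simp] lemma mk0_apply (f : ℕ → ℂ) (h) (k : ℕ) : mk0 f h k = f k := rfl

lemma c0_tendsto (f : C₀(ℕ, ℂ)) : Tendsto (fun k => f k) atTop (𝓝 0) := by
  have := f.zero_at_infty'
  rwa [cocompact_eq_atTop] at this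

lemma c0_norm_le {f : C₀(ℕ, ℂ)} {C : ℝ} (hC : 0 ≤ C) (h : ∀ k, ‖f k‖ ≤ C) : ‖f‖ ≤ C := by
  rw [← norm_toBCF_eq_norm]
  exact BoundedContinuousFunction.norm_le hC |>.mpr h

lemma c0_apply_norm_le (f : C₀(ℕ, ℂ)) (k : ℕ) : ‖f k‖ ≤ ‖f‖ := by
  rw [← norm_toBCF_eq_norm]
  exact f.toBCF.norm_coe_le_norm k

lemma c0_coe_sum {F : Finset ℕ} {g : ℕ → C₀(ℕ, ℂ)} (j : ℕ) :
    (∑ k ∈ F, g k) j = ∑ k ∈ F, g k j := by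
  classical
  induction F using Finset.induction with
  | empty => simp
  | insert h ih => simp_all

/-- the `k`-th "unit vector" in `c₀`. -/
def c0single (k : ℕ) : C₀(ℕ, ℂ) :=
  mk0 (fun j => if j = k then 1 else 0) (by
    refine tendsto_atTop_of_eventually_const (i₀ := k + 1) fun j hj => ?_
    simp [Nat.ne_of_gt hj])

@[simp] lemma c0single_apply (k j : ℕ) : c0single k j = if j = k then 1 else 0 := rfl

variable (φ : C₀(ℕ, ℂ) →L[ℂ] ℂ)

/-- The coefficient sequence of a functional on `c₀`. -/
def c0coef (k : ℕ) : ℂ := φ (c0single k)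

lemma c0_sum_coef_le (F : Finset ℕ) : ∑ k ∈ F, ‖c0coef φ k‖ ≤ ‖φ‖ := by
  classical
  set u : ℕ → ℂ := fun k => if c0coef φ k = 0 then 0 else starRingEnd ℂ (c0coef φ k) / ‖c0coef φ k‖
  have hu : ∀ k, ‖u k‖ ≤ 1 := by
    intro k
    by_cases h : c0coef φ k = 0
    · simp [u, h]
    · simp only [u, if_neg h]
      rw [norm_div]
      rw [RCLike.norm_conj]
      rw [Complex.norm_real, norm_norm, div_self (by simpa using h)]
  have hua : ∀ k, u k * c0coef φ k = (‖c0coef φ k‖ : ℂ) := by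
    intro k
    by_cases h : c0coef φ k = 0
    · simp [u, h]
    · simp only [u, if_neg h]
      rw [div_mul_eq_mul_div, mul_comm, Complex.mul_conj']
      rw [pow_two, mul_div_assoc, div_self (by simpa using h), mul_one]
  set s : C₀(ℕ, ℂ) := ∑ k ∈ F, u k • c0single k
  have hs_apply : ∀ j, s j = if j ∈ F then u j else 0 := by
    intro j
    simp only [s, c0_coe_sum, ZeroAtInftyContinuousMap.smul_apply, c0single_apply,
      smul_eq_mul, mul_ite, mul_one, mul_zero]
    simp [Finset.sum_ite_eq]
  have hs_norm : ‖s‖ ≤ 1 := by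
    refine c0_norm_le zero_le_one fun j => ?_
    rw [hs_apply]
    split
    · exact hu j
    · simp
  have hφs : φ s = ∑ k ∈ F, (‖c0coef φ k‖ : ℂ) := by
    simp only [s, map_sum, map_smul, smul_eq_mul]
    exact Finset.sum_congr rfl fun k _ => hua k
  calc ∑ k ∈ F, ‖c0coef φ k‖ = ‖φ s‖ := by
        rw [hφs]
        rw [← Complex.ofReal_sum]
        rw [Complex.norm_real]
        rw [Real.norm_of_nonneg (Finset.sum_nonneg fun k _ => norm_nonneg _)]
    _ ≤ ‖φ‖ * ‖s‖ := φ.le_opNorm s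
    _ ≤ ‖φ‖ := by nlinarith [norm_nonneg φ, norm_nonneg s]

end C0Aux

section C0Dual
open scoped ZeroAtInfty
variable (φ : C₀(ℕ, ℂ) →L[ℂ] ℂ)

lemma c0_coef_summable : Summable (fun k => ‖c0coef φ k‖) :=
  summable_of_sum_range_le (fun _ => norm_nonneg _) (fun n => c0_sum_coef_le φ (Finset.range n))

lemma c0_repr (h : C₀(ℕ, ℂ)) : φ h = ∑' k, c0coef φ k * h k := by
  classical
  have hsum : Summable (fun k => c0coef φ k * h k) := by
    refine Summable.of_norm_bounded (g := fun k => ‖c0coef φ k‖ * ‖h‖)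
      ((c0_coef_summable φ).mul_right _) fun k => ?_
    rw [norm_mul]
    exact mul_le_mul_of_nonneg_left (c0_apply_norm_le h k) (norm_nonneg _)
  set t : ℕ → C₀(ℕ, ℂ) := fun m => ∑ k ∈ Finset.range m, h k • c0single k with ht
  have ht_apply : ∀ m j, t m j = if j < m then h j else 0 := by
    intro m j
    simp only [t, c0_coe_sum, ZeroAtInftyContinuousMap.smul_apply, c0single_apply,
      smul_eq_mul, mul_ite, mul_one, mul_zero]
    simp [Finset.sum_ite_eq, Finset.mem_range]
  have htrunc : Tendsto t atTop (𝓝 h) := by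
    rw [Metric.tendsto_atTop]
    intro ε hε
    obtain ⟨J, hJ⟩ := (Metric.tendsto_atTop.mp (c0_tendsto h)) (ε / 2) (half_pos hε)
    refine ⟨J, fun m hm => ?_⟩
    rw [dist_eq_norm]
    have hle : ‖t m - h‖ ≤ ε / 2 := by
      refine c0_norm_le (le_of_lt (half_pos hε)) fun j => ?_
      have hsub : (t m - h) j = t m j - h j := rfl
      rw [hsub, ht_apply]
      split
      · next hj =>
        simp only [sub_self, norm_zero]
        exact le_of_lt (half_pos hε)
      · next hj =>
        have : j ≥ J := le_trans hm (le_of_not_gt hj)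
        have := hJ j this
        rw [dist_zero_right] at this
        simpa using le_of_lt this
    linarith
  have h1 : Tendsto (fun m => φ (t m)) atTop (𝓝 (φ h)) :=
    (φ.continuous.tendsto h).comp htrunc
  have h2 : Tendsto (fun m => φ (t m)) atTop (𝓝 (∑' k, c0coef φ k * h k)) := by
    have heq : ∀ m, φ (t m) = ∑ k ∈ Finset.range m, c0coef φ k * h k := by
      intro m
      simp only [t, map_sum, map_smul, smul_eq_mul]
      exact Finset.sum_congr rfl fun k _ => mul_comm _ _
    rw [funext heq]
    exact hsum.hasSum.tendsto_sum_nat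
  exact tendsto_nhds_unique h1 h2

lemma c0_weak (v : ℕ → C₀(ℕ, ℂ)) (y : C₀(ℕ, ℂ)) (C : ℝ)
    (hb : ∀ n, ‖v n‖ ≤ C)
    (hcoord : ∀ k, Tendsto (fun n => v n k) atTop (𝓝 (y k))) :
    Tendsto (fun n => φ (v n)) atTop (𝓝 (φ y)) := by
  have key := tendsto_tsum_of_dominated_convergence
    (f := fun (n : ℕ) (k : ℕ) => c0coef φ k * v n k)
    (g := fun k => c0coef φ k * y k) (bound := fun k => ‖c0coef φ k‖ * C)
    ((c0_coef_summable φ).mul_right C)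
    (fun k => (hcoord k).const_mul _)
    (Eventually.of_forall fun n k => by
      rw [norm_mul]
      exact mul_le_mul_of_nonneg_left ((c0_apply_norm_le _ k).trans (hb n)) (norm_nonneg _))
  have hfun : (fun n => φ (v n)) = fun n => ∑' k, c0coef φ k * v n k :=
    funext fun n => c0_repr φ (v n)
  rw [hfun, c0_repr φ y]
  exact key

end C0Dual

section DualAux
open scoped ZeroAtInfty
variable {E : Type*} [NormedAddCommGroup E] [NormedSpace ℂ E]

/-- From pointwise limits of a bounded sequence of functionals along a countable family,
produce a functional realizing the limits (via Hahn–Banach). -/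
lemma exists_dual_of_pointwise_limit (P : ℕ → E) (u : ℕ → NormedSpace.Dual ℂ E)
    (hu : ∀ n, ‖u n‖ ≤ 1) (a : ℕ → ℂ)
    (ha : ∀ k, Tendsto (fun n => u n (P k)) atTop (𝓝 (a k))) :
    ∃ w : NormedSpace.Dual ℂ E, ∀ k, w (P k) = a k := by
  classical
  set S : (ℕ →₀ ℂ) →ₗ[ℂ] E := Finsupp.linearCombination ℂ P with hS
  set L : (ℕ →₀ ℂ) →ₗ[ℂ] ℂ := Finsupp.linearCombination ℂ a with hL
  have key : ∀ c : ℕ →₀ ℂ, Tendsto (fun n => u n (S c)) atTop (𝓝 (L c)) := by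
    intro c
    have h1 : ∀ n, u n (S c) = ∑ k ∈ c.support, c k • u n (P k) := by
      intro n
      rw [hS, Finsupp.linearCombination_apply, Finsupp.sum, map_sum]
      exact Finset.sum_congr rfl fun k _ => (u n).map_smul _ _
    have h2 : L c = ∑ k ∈ c.support, c k • a k := by
      rw [hL, Finsupp.linearCombination_apply, Finsupp.sum]
    rw [funext h1, h2]
    exact tendsto_finset_sum _ fun k _ => (ha k).const_smul (c k)
  have hker : LinearMap.ker S ≤ LinearMap.ker L := by
    intro c hc
    rw [LinearMap.mem_ker] at hc ⊢
    have h0 : Tendsto (fun n => u n (S c)) atTop (𝓝 (0 : ℂ)) := by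
      simp only [hc, map_zero]
      exact tendsto_const_nhds
    exact tendsto_nhds_unique (key c) h0
  set w₀l : LinearMap.range S →ₗ[ℂ] ℂ :=
    (Submodule.liftQ (LinearMap.ker S) L hker).comp
      (LinearMap.quotKerEquivRange S).symm.toLinearMap with hw₀l
  have hval : ∀ c : ℕ →₀ ℂ, w₀l ⟨S c, LinearMap.mem_range_self S c⟩ = L c := by
    intro c
    have h3 : (LinearMap.quotKerEquivRange S) (Submodule.Quotient.mk c)
        = ⟨S c, LinearMap.mem_range_self S c⟩ := by
      apply Subtype.ext
      exact LinearMap.quotKerEquivRange_apply_mk S c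
    have h4 : (LinearMap.quotKerEquivRange S).symm ⟨S c, LinearMap.mem_range_self S c⟩
        = Submodule.Quotient.mk c := by
      rw [LinearEquiv.symm_apply_eq]; exact h3.symm
    rw [hw₀l]
    simp only [LinearMap.comp_apply, LinearEquiv.coe_toLinearMap, h4, Submodule.liftQ_apply]
  have hbound : ∀ z : LinearMap.range S, ‖w₀l z‖ ≤ 1 * ‖(z : E)‖ := by
    rintro ⟨z, hz⟩
    obtain ⟨c, rfl⟩ := LinearMap.mem_range.mp hz
    have heq : (⟨S c, hz⟩ : LinearMap.range S) = ⟨S c, LinearMap.mem_range_self S c⟩ := rfl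
    rw [heq, hval c]
    refine le_of_tendsto (key c).norm (Eventually.of_forall fun n => ?_)
    calc ‖u n (S c)‖ ≤ ‖u n‖ * ‖S c‖ := (u n).le_opNorm _
      _ ≤ 1 * ‖S c‖ := mul_le_mul_of_nonneg_right (hu n) (norm_nonneg _)
  set w₀ : LinearMap.range S →L[ℂ] ℂ := LinearMap.mkContinuous w₀l 1 hbound with hw₀
  obtain ⟨w, hw, -⟩ := exists_extension_norm_eq (LinearMap.range S) w₀
  refine ⟨w, fun k => ?_⟩
  have hPk : S (Finsupp.single k 1) = P k := by
    rw [hS, Finsupp.linearCombination_single, one_smul]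
  have hmem : P k ∈ LinearMap.range S := ⟨Finsupp.single k 1, hPk⟩
  calc w (P k) = w₀ ⟨P k, hmem⟩ := hw ⟨P k, hmem⟩
    _ = w₀l ⟨P k, hmem⟩ := rfl
    _ = L (Finsupp.single k 1) := by
        have heq : (⟨P k, hmem⟩ : LinearMap.range S)
            = ⟨S (Finsupp.single k 1), LinearMap.mem_range_self S _⟩ := Subtype.ext hPk.symm
        rw [heq, hval]
    _ = a k := by rw [hL, Finsupp.linearCombination_single, one_smul]

/-- Diagonal subsequence extraction for a bounded sequence of functionals along a countable
family of vectors. -/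
lemma exists_subseq_dual_limit (P : ℕ → E) (C : ℝ) (hC : ∀ k, ‖P k‖ ≤ C)
    (u : ℕ → NormedSpace.Dual ℂ E) (hu : ∀ n, ‖u n‖ ≤ 1) :
    ∃ (ψ : ℕ → ℕ) (a : ℕ → ℂ), StrictMono ψ ∧
      ∀ k, Tendsto (fun n => u (ψ n) (P k)) atTop (𝓝 (a k)) := by
  have hK : IsCompact (Set.univ.pi fun _ : ℕ => Metric.closedBall (0 : ℂ) C) :=
    isCompact_univ_pi fun _ => isCompact_closedBall 0 C
  have hmem : ∀ n, (fun k => u n (P k)) ∈ Set.univ.pi fun _ : ℕ =>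
      Metric.closedBall (0 : ℂ) C := by
    intro n k _
    rw [Metric.mem_closedBall, dist_zero_right]
    calc ‖u n (P k)‖ ≤ ‖u n‖ * ‖P k‖ := (u n).le_opNorm _
      _ ≤ 1 * C := mul_le_mul (hu n) (hC k) (norm_nonneg _) zero_le_one
      _ = C := one_mul C
  obtain ⟨a, -, ψ, hψ, hconv⟩ := hK.isSeqCompact hmem
  exact ⟨ψ, a, hψ, fun k => tendsto_pi_nhds.mp hconv k⟩

/-- The operator `z ↦ (z (P k))ₖ` into `c₀`. -/
noncomputable def Tc0 (P : ℕ → E) (C : ℝ)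
    (hP : ∀ z : NormedSpace.Dual ℂ E, Tendsto (fun k => z (P k)) atTop (𝓝 0))
    (hC : ∀ k, ‖P k‖ ≤ C) : NormedSpace.Dual ℂ E →L[ℂ] C₀(ℕ, ℂ) :=
  LinearMap.mkContinuous
    { toFun := fun z => mk0 (fun k => z (P k)) (hP z)
      map_add' := fun z w => by ext j; simp; rfl
      map_smul' := fun c z => by ext j; simp; rfl }
    C (fun z => by
      have hC0 : (0 : ℝ) ≤ C := le_trans (norm_nonneg (P 0)) (hC 0)
      refine c0_norm_le (mul_nonneg hC0 (norm_nonneg z)) fun k => ?_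
      calc ‖z (P k)‖ ≤ ‖z‖ * ‖P k‖ := z.le_opNorm _
        _ ≤ ‖z‖ * C := mul_le_mul_of_nonneg_left (hC k) (norm_nonneg _)
        _ = C * ‖z‖ := mul_comm _ _)

@[simp] lemma Tc0_apply (P : ℕ → E) (C : ℝ) (hP) (hC) (z : NormedSpace.Dual ℂ E) (k : ℕ) :
    Tc0 P C hP hC z k = z (P k) := rfl

lemma Tc0_norm_le (P : ℕ → E) (C : ℝ) (hP) (hC) (z : NormedSpace.Dual ℂ E) :
    ‖Tc0 P C hP hC z‖ ≤ C * ‖z‖ := by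
  have hC0 : (0 : ℝ) ≤ C := le_trans (norm_nonneg (P 0)) (hC 0)
  refine c0_norm_le (mul_nonneg hC0 (norm_nonneg z)) fun k => ?_
  calc ‖z (P k)‖ ≤ ‖z‖ * ‖P k‖ := z.le_opNorm _
    _ ≤ ‖z‖ * C := mul_le_mul_of_nonneg_left (hC k) (norm_nonneg _)
    _ = C * ‖z‖ := mul_comm _ _

end DualAux

/-- `c₀` lifted to an arbitrary universe. -/
abbrev Yc0 : Type u := ULift.{u} C₀(ℕ, ℂ)

set_option maxHeartbeats 2000000 in
set_option synthInstance.maxHeartbeats 400000 in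
/-- If every weakly compact operator from `⊗̂^N_s X` to any Banach space is completely
continuous on the diagonal `Δ_N(X)`, then whenever `(P_n)` is a weakly null sequence of
`N`-homogeneous polynomials on `X` and `(x_n)` converges `P_N`-weakly to `x`, one has
`P_n(x_n) → 0`. -/
theorem PN_DunfordPettis_of_completely_continuous_on_diagonal {X : Type u}
    [NormedAddCommGroup X] [NormedSpace ℂ X] [CompleteSpace X] (N : ℕ) (hN : 0 < N)
    (hyp : ∀ (Y : Type u) [NormedAddCommGroup Y] [NormedSpace ℂ Y] [CompleteSpace Y]
      (T : symTensor N X →L[ℂ] Y),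
      (∀ u : ℕ → symTensor N X, (∀ n, ‖u n‖ ≤ 1) →
        ∃ ψ : ℕ → ℕ, StrictMono ψ ∧ ∃ y : Y,
          ∀ φ : Y →L[ℂ] ℂ, Tendsto (fun n => φ (T (u (ψ n)))) atTop (𝓝 (φ y))) →
      ∀ (x : ℕ → X) (x₀ : X),
        (∀ A : ContinuousMultilinearMap ℂ (fun _ : Fin N => X) ℂ,
          Tendsto (fun n => A (fun _ => x n)) atTop (𝓝 (A (fun _ => x₀)))) →
        Tendsto (fun n => ‖T (deltaD N (x n)) - T (deltaD N x₀)‖) atTop (𝓝 0))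
    (P : ℕ → ContinuousMultilinearMap ℂ (fun _ : Fin N => X) ℂ)
    (hPsymm : ∀ n (σ : Equiv.Perm (Fin N)) (v : Fin N → X), P n (v ∘ σ) = P n v)
    (hPweak : ∀ Φ : NormedSpace.Dual ℂ (ContinuousMultilinearMap ℂ (fun _ : Fin N => X) ℂ),
      Tendsto (fun n => Φ (P n)) atTop (𝓝 0))
    (x : ℕ → X) (x₀ : X)
    (hx : ∀ M : ℕ, 1 ≤ M → M ≤ N →
      ∀ A : ContinuousMultilinearMap ℂ (fun _ : Fin M => X) ℂ,
        Tendsto (fun n => A (fun _ => x n)) atTop (𝓝 (A (fun _ => x₀)))) :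
    Tendsto (fun n => P n (fun _ => x n)) atTop (𝓝 0) := by
  classical
  -- `(P n)` is norm bounded, by Banach–Steinhaus in the dual.
  obtain ⟨C, hC⟩ : ∃ C, ∀ n, ‖P n‖ ≤ C := by
    have hpt : ∀ Φ : NormedSpace.Dual ℂ (ContinuousMultilinearMap ℂ (fun _ : Fin N => X) ℂ),
        ∃ M, ∀ n, ‖NormedSpace.inclusionInDoubleDual ℂ _ (P n) Φ‖ ≤ M := by
      intro Φ
      have htd : Tendsto (fun n => ‖Φ (P n)‖) atTop (𝓝 0) := by
        simpa using (hPweak Φ).norm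
      obtain ⟨M, hM⟩ := htd.bddAbove_range
      exact ⟨M, fun n => hM ⟨n, rfl⟩⟩
    haveI : CompleteSpace (NormedSpace.Dual ℂ (ContinuousMultilinearMap ℂ (fun _ : Fin N => X) ℂ)) :=
      inferInstanceAs (CompleteSpace (ContinuousMultilinearMap ℂ (fun _ : Fin N => X) ℂ →L[ℂ] ℂ))
    obtain ⟨C, hC⟩ := banach_steinhaus hpt
    refine ⟨C, fun n => ?_⟩
    calc ‖P n‖ = ‖NormedSpace.inclusionInDoubleDual ℂ _ (P n)‖ :=
          ((NormedSpace.inclusionInDoubleDualLi ℂ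
            (E := ContinuousMultilinearMap ℂ (fun _ : Fin N => X) ℂ)).norm_map (P n)).symm
      _ ≤ C := hC n
  set T0 := Tc0 P C hPweak hC with hT0
  let upL : C₀(ℕ, ℂ) →L[ℂ] Yc0.{u} :=
    ((ContinuousLinearEquiv.ulift (R₁ := ℂ) (M₁ := C₀(ℕ, ℂ))).symm : C₀(ℕ, ℂ) →L[ℂ] Yc0.{u})
  let T : symTensor N X →L[ℂ] Yc0.{u} := upL.comp (T0.comp (symTensor N X).subtypeL)
  have hC0 : (0 : ℝ) ≤ C := le_trans (norm_nonneg (P 0)) (hC 0)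
  -- The weak compactness hypothesis for `T`.
  have hweakcpt : ∀ u : ℕ → symTensor N X, (∀ n, ‖u n‖ ≤ 1) →
      ∃ ψ : ℕ → ℕ, StrictMono ψ ∧ ∃ y : Yc0.{u},
        ∀ φ : Yc0.{u} →L[ℂ] ℂ, Tendsto (fun n => φ (T (u (ψ n)))) atTop (𝓝 (φ y)) := by
    intro u hu
    have hu' : ∀ n, ‖(u n : NormedSpace.Dual ℂ
        (ContinuousMultilinearMap ℂ (fun _ : Fin N => X) ℂ))‖ ≤ 1 := fun n => hu n
    obtain ⟨ψ, a, hψ, ha⟩ := exists_subseq_dual_limit P C hC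
      (fun n => (u n : NormedSpace.Dual ℂ
        (ContinuousMultilinearMap ℂ (fun _ : Fin N => X) ℂ))) hu'
    obtain ⟨w, hwP⟩ := exists_dual_of_pointwise_limit P
      (fun n => (u (ψ n) : NormedSpace.Dual ℂ
        (ContinuousMultilinearMap ℂ (fun _ : Fin N => X) ℂ))) (fun n => hu' (ψ n)) a
      (fun k => ha k)
    have ha0 : Tendsto a atTop (𝓝 0) := by
      have h := hPweak w
      have heq : (fun k => w (P k)) = a := funext fun k => hwP k
      rwa [heq] at h
    refine ⟨ψ, hψ, ⟨upL (mk0 a ha0), fun φ => ?_⟩⟩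
    exact c0_weak (φ.comp upL) (fun n => T0 (u (ψ n))) (mk0 a ha0) C
      (fun n => by
        calc ‖T0 ((u (ψ n) : NormedSpace.Dual ℂ
              (ContinuousMultilinearMap ℂ (fun _ : Fin N => X) ℂ)))‖
            ≤ C * ‖(u (ψ n) : NormedSpace.Dual ℂ
              (ContinuousMultilinearMap ℂ (fun _ : Fin N => X) ℂ))‖ :=
              Tc0_norm_le P C hPweak hC _
          _ ≤ C * 1 := mul_le_mul_of_nonneg_left (hu' (ψ n)) hC0
          _ = C := mul_one C)
      (fun k => ha k)
  have hdiag := hyp Yc0.{u} T hweakcpt x x₀ (hx N hN le_rfl)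
  -- coordinatewise lower bound for the norms
  have hbound2 : ∀ n, ‖P n (fun _ => x n) - P n (fun _ => x₀)‖
      ≤ ‖T (deltaD N (x n)) - T (deltaD N x₀)‖ := by
    intro n
    have hnormeq : ‖T (deltaD N (x n)) - T (deltaD N x₀)‖
        = ‖T0 (deltaDiag N (x n)) - T0 (deltaDiag N x₀)‖ := rfl
    have h5 : (T0 (deltaDiag N (x n)) - T0 (deltaDiag N x₀)) n
        = P n (fun _ => x n) - P n (fun _ => x₀) := rfl
    rw [hnormeq, ← h5]
    exact c0_apply_norm_le _ n
  have h6 : Tendsto (fun n => P n (fun _ => x n) - P n (fun _ => x₀)) atTop (𝓝 0) :=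
    squeeze_zero_norm hbound2 hdiag
  have h7 : Tendsto (fun n => P n (fun _ => x₀)) atTop (𝓝 0) := by
    have h := hPweak (deltaDiag N x₀)
    exact h
  have h8 := h6.add h7
  simpa using h8
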